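/- Under the uniform popularity distribution p_j = 1/K and with the communication cost formula C = ∑_{j=1}^K p_j / √(1 − (1 − p_j)^M), if M = o(K) and M ≥ 1, then C = Θ(√(K/M)). -/

import Mathlib

open Filter in
/-- Under the uniform popularity `p_j = 1/K` and the communication cost formula
`C = ∑_{j=1}^K p_j / √(1 - (1 - p_j)^{M})`, if `1 ≤ M = o(K)` then `C = Θ(√(K/M))`. -/
theorem stmt_10 (M : ℕ → ℕ) (hM : ∀ K, 1 ≤ M K)
    (hMo : Tendsto (fun K : ℕ => (M K : ℝ) / K) atTop (nhds 0)) :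
    ∃ c₁ > (0 : ℝ), ∃ c₂ > (0 : ℝ), ∀ᶠ K : ℕ in atTop,
      c₁ * Real.sqrt ((K : ℝ) / M K) ≤
          (∑ _j ∈ Finset.Icc 1 K,
            ((1 : ℝ) / K) / Real.sqrt (1 - (1 - 1 / (K : ℝ)) ^ M K)) ∧
        (∑ _j ∈ Finset.Icc 1 K,
            ((1 : ℝ) / K) / Real.sqrt (1 - (1 - 1 / (K : ℝ)) ^ M K)) ≤
          c₂ * Real.sqrt ((K : ℝ) / M K) := by
  refine ⟨1, one_pos, Real.sqrt 2, Real.sqrt_pos.mpr two_pos, ?_⟩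
  have h1 : ∀ᶠ K : ℕ in atTop, (M K : ℝ) / K < 1 :=
    hMo.eventually_lt_const one_pos
  filter_upwards [h1, eventually_ge_atTop 1] with K htlt hK1
  have hK : (1:ℝ) ≤ K := by exact_mod_cast hK1
  have hK0 : (0:ℝ) < K := by linarith
  have hM1 : (1:ℝ) ≤ M K := by exact_mod_cast hM K
  set x : ℝ := 1 / (K:ℝ) with hxdef
  set t : ℝ := (M K : ℝ) / K with htdef
  have ht0 : 0 < t := div_pos (by linarith) hK0
  have ht1 : t ≤ 1 := le_of_lt htlt
  have hx0 : 0 < x := by positivity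
  have hx1 : x ≤ 1 := by rw [hxdef, div_le_one hK0]; exact hK
  have htx : t = (M K : ℝ) * x := by rw [htdef, hxdef]; ring
  -- Bernoulli lower bound on (1-x)^M
  have hbern : 1 - t ≤ (1 - x) ^ M K := by
    have h := one_add_mul_le_pow (a := -x) (by linarith) (M K)
    have : 1 + (M K : ℝ) * (-x) = 1 - t := by rw [htx]; ring
    rw [this] at h
    simpa [sub_eq_add_neg] using h
  -- Exponential upper bound on (1-x)^M
  have hexp : (1 - x) ^ M K ≤ 1 - t / 2 := by
    have h1x : 1 - x ≤ Real.exp (-x) := by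
      have := Real.add_one_le_exp (-x); linarith
    have hpow : (1 - x) ^ M K ≤ Real.exp (-x) ^ M K :=
      pow_le_pow_left₀ (by linarith) h1x _
    have heq : Real.exp (-x) ^ M K = Real.exp (-t) := by
      rw [← Real.exp_nat_mul]; congr 1; rw [htx]; ring
    have he : 1 + t ≤ Real.exp t := by have := Real.add_one_le_exp t; linarith
    have he0 : 0 < Real.exp t := Real.exp_pos t
    have hmul : Real.exp (-t) * Real.exp t = 1 := by
      rw [← Real.exp_add]; simp
    have ha0 : 0 < Real.exp (-t) := Real.exp_pos _
    have hfin : Real.exp (-t) ≤ 1 - t / 2 := by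
      nlinarith [mul_pos ha0 ht0, sq_nonneg t]
    calc (1 - x) ^ M K ≤ Real.exp (-x) ^ M K := hpow
      _ = Real.exp (-t) := heq
      _ ≤ 1 - t / 2 := hfin
  set D : ℝ := 1 - (1 - x) ^ M K with hDdef
  have hDt : D ≤ t := by rw [hDdef]; linarith
  have hDlb : t / 2 ≤ D := by rw [hDdef]; linarith
  have hD0 : 0 < D := lt_of_lt_of_le (by linarith) hDlb
  have hsD0 : 0 < Real.sqrt D := Real.sqrt_pos.mpr hD0
  -- the sum is constant
  have hsum : (∑ _j ∈ Finset.Icc 1 K, ((1:ℝ)/K) / Real.sqrt D)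
      = 1 / Real.sqrt D := by
    rw [Finset.sum_const, Nat.card_Icc, nsmul_eq_mul]
    have : (↑(K + 1 - 1) : ℝ) = (K : ℝ) := by
      have : K + 1 - 1 = K := by omega
      rw [this]
    rw [this]
    field_simp
  rw [hsum]
  have hKM : (K:ℝ) / (M K) = t⁻¹ := by rw [htdef, inv_div]
  rw [hKM]
  have hsqt : Real.sqrt t⁻¹ = (Real.sqrt t)⁻¹ := Real.sqrt_inv t
  constructor
  · -- lower bound: √(t⁻¹) ≤ 1/√D
    rw [one_mul, hsqt, one_div]
    exact inv_anti₀ hsD0 (Real.sqrt_le_sqrt hDt)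
  · -- upper bound: 1/√D ≤ √2 * √(t⁻¹)
    rw [hsqt, one_div, ← Real.sqrt_inv D]
    have hinv : D⁻¹ ≤ 2 / t := by
      rw [show (2:ℝ) / t = (t / 2)⁻¹ by rw [inv_div]]
      exact inv_anti₀ (by linarith) hDlb
    calc Real.sqrt D⁻¹ ≤ Real.sqrt (2 / t) := Real.sqrt_le_sqrt hinv
      _ = Real.sqrt 2 * (Real.sqrt t)⁻¹ := by
          rw [div_eq_mul_inv, Real.sqrt_mul two_pos.le, Real.sqrt_inv]
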